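/- Let T be a rectangular standard Young tableau. If C is a uniform sub-diagram of the m-diagram φ(T) whose set of endpoints does not contain the vertex 1, then the rotation ρ(C) (shifting all endpoints down by 1) is a uniform sub-diagram of φ(P(T)). -/

import Mathlib

/-- `T` (as a function `ℕ → ℕ → ℕ`, row-column indexed from `0`) is a rectangular
standard Young tableau with `r` rows, `c` columns and content `{1,…,r*c}` :
rows strictly increase left-to-right, columns strictly increase top-to-bottom. -/
def IsRectSYT (r c : ℕ) (T : ℕ → ℕ → ℕ) : Prop :=
  (∀ i j, i < r → j + 1 < c → T i j < T i (j + 1)) ∧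
  (∀ i j, i + 1 < r → j < c → T i j < T (i + 1) j) ∧
  (∀ i j, i < r → j < c → 1 ≤ T i j ∧ T i j ≤ r * c) ∧
  (∀ v, 1 ≤ v → v ≤ r * c → ∃ i j, i < r ∧ j < c ∧ T i j = v)

/-- One step of the jeu de taquin slide of the empty box at position `p` in an
`r × c` rectangular tableau: slide the right neighbour `b` left if `b < a` (entries
being distinct, `≤` and `<` agree), else slide the lower neighbour `a` up. -/
def slideNext (r c : ℕ) (T : ℕ → ℕ → ℕ) (p : ℕ × ℕ) : ℕ × ℕ :=
  if p.1 + 1 < r ∧ p.2 + 1 < c then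
    (if T p.1 (p.2 + 1) ≤ T (p.1 + 1) p.2 then (p.1, p.2 + 1) else (p.1 + 1, p.2))
  else if p.2 + 1 < c then (p.1, p.2 + 1)
  else if p.1 + 1 < r then (p.1 + 1, p.2)
  else p

/-- The sliding path of the empty box during promotion, starting in the top-left
corner; the path stabilizes once the empty box has nothing below or to its right. -/
def slidePath (r c : ℕ) (T : ℕ → ℕ → ℕ) : ℕ → ℕ × ℕ
  | 0 => (0, 0)
  | k + 1 => slideNext r c T (slidePath r c T k)

open Classical in
/-- Jeu de taquin promotion of a rectangular standard Young tableau: erase the entry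
`1` in the top-left corner, slide along the sliding path, decrement all entries by `1`
and put `r*c` in the final empty box. -/
noncomputable def promote (r c : ℕ) (T : ℕ → ℕ → ℕ) : ℕ → ℕ → ℕ := fun i j =>
  if (i, j) = slidePath r c T (r + c) then r * c
  else if h : ∃ k, slidePath r c T k = (i, j) then
    T (slidePath r c T (Nat.find h + 1)).1 (slidePath r c T (Nat.find h + 1)).2 - 1
  else T i j - 1

/-- The greedy matching between rows `i` and `i+1` of `T` : the list whose `j`-th item
is the column (in row `i`) matched to column `j` of row `i+1`, namely the largest
column `j'` of row `i` with `T i j' ≤ T (i+1) j` that is not already matched. -/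
def partnerList (c : ℕ) (T : ℕ → ℕ → ℕ) (i : ℕ) : ℕ → List ℕ
  | 0 => []
  | j + 1 =>
    let prev := partnerList c T i j
    prev ++ [((List.range c).filter
      (fun j' => decide (T i j' ≤ T (i + 1) j ∧ j' ∉ prev))).foldr max 0]

/-- The column of row `i` matched to column `j` of row `i+1` by the greedy algorithm. -/
def partnerCol (c : ℕ) (T : ℕ → ℕ → ℕ) (i j : ℕ) : ℕ :=
  (partnerList c T i (j + 1)).getD j 0

/-- The m-diagram `φ(T)` of an `r × c` rectangular standard Young tableau: the union
over `0 ≤ i ≤ r-2` of the arcs `(T i (partnerCol c T i j), T (i+1) j)` of the greedy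
matchings between consecutive rows. -/
def mDiagram (r c : ℕ) (T : ℕ → ℕ → ℕ) : Finset (ℕ × ℕ) :=
  ((Finset.range (r - 1)) ×ˢ (Finset.range c)).image
    (fun p => (T p.1 (partnerCol c T p.1 p.2), T (p.1 + 1) p.2))

/-- The set of endpoints of a collection of arcs. -/
def endpoints (C : Finset (ℕ × ℕ)) : Finset ℕ := C.image Prod.fst ∪ C.image Prod.snd

/-- Two arcs share an endpoint. -/
def SharesEndpoint (p q : ℕ × ℕ) : Prop :=
  p.1 = q.1 ∨ p.1 = q.2 ∨ p.2 = q.1 ∨ p.2 = q.2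

/-- Two arcs cross. -/
def Crosses (p q : ℕ × ℕ) : Prop :=
  (p.1 < q.1 ∧ q.1 < p.2 ∧ p.2 < q.2) ∨ (q.1 < p.1 ∧ p.1 < q.2 ∧ q.2 < p.2)

/-- `C` is a nonempty subcollection of `M` closed under sharing endpoints, such that
no arc of `M` outside `C` crosses an arc of `C`. -/
def IsPreSubdiagram (M C : Finset (ℕ × ℕ)) : Prop :=
  C ⊆ M ∧ C.Nonempty ∧
  (∀ p ∈ M, ∀ q ∈ C, SharesEndpoint p q → p ∈ C) ∧
  (∀ p ∈ M, p ∉ C → ∀ q ∈ C, ¬ Crosses p q)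

/-- `C` is a sub-diagram of `M` : a nonempty **proper** subcollection closed under
sharing endpoints and not crossed from outside. -/
def IsSubdiagram (M C : Finset (ℕ × ℕ)) : Prop := IsPreSubdiagram M C ∧ C ≠ M

/-- `C` is a component of `M` : it satisfies the closure conditions and has no proper
subcollection forming a sub-diagram of `M`. -/
def IsComponent (M C : Finset (ℕ × ℕ)) : Prop :=
  IsPreSubdiagram M C ∧ ∀ C', C' ⊂ C → ¬ IsSubdiagram M C'

/-- A collection of arcs is uniform if its endpoints are consecutive integers. -/
def IsUniform (C : Finset (ℕ × ℕ)) : Prop := ∃ a b, endpoints C = Finset.Icc a b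

/-- `ρ` on `{1,…,n}` : `i ↦ i-1 mod n`, with representatives in `{1,…,n}`. -/
def rotIdx (n i : ℕ) : ℕ := if i = 1 then n else i - 1

/-- Rotation of an arc, reordered so the smaller endpoint comes first. -/
def rotArc (n : ℕ) (p : ℕ × ℕ) : ℕ × ℕ :=
  (min (rotIdx n p.1) (rotIdx n p.2), max (rotIdx n p.1) (rotIdx n p.2))

/-- `d`-fold rotation of a set of boundary points. -/
def rotSetPow (n d : ℕ) (S : Finset ℕ) : Finset ℕ := S.image ((rotIdx n)^[d])

/-- The partition of the boundary `{1,…,r*c}` induced by the endpoint sets of the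
components of `φ(T)` is invariant under `d`-fold rotation. -/
def RotSym (r c : ℕ) (T : ℕ → ℕ → ℕ) (d : ℕ) : Prop :=
  {A : Finset ℕ | ∃ C, IsComponent (mDiagram r c T) C ∧ A = rotSetPow (r * c) d (endpoints C)}
    = {A : Finset ℕ | ∃ C, IsComponent (mDiagram r c T) C ∧ A = endpoints C}


lemma foldr_max_mem (l : List ℕ) (hl : l ≠ []) : l.foldr max 0 ∈ l := by
  induction l with
  | nil => simp at hl
  | cons a l ih =>
    rcases eq_or_ne l [] with rfl | h
    · simp
    · rcases le_or_gt (l.foldr max 0) a with h2 | h2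
      · simp [max_eq_left h2]
      · have : List.foldr max 0 (a :: l) = l.foldr max 0 := by
          simp [max_eq_right h2.le]
        rw [this]
        exact List.mem_cons_of_mem _ (ih h)

lemma foldr_max_le (l : List ℕ) (x : ℕ) (hx : x ∈ l) : x ≤ l.foldr max 0 := by
  induction l with
  | nil => simp at hx
  | cons a l ih =>
    rcases List.mem_cons.1 hx with rfl | hx
    · simp
    · exact le_trans (ih hx) (by simp)
/-- Number of columns of a row (given by `f`) whose value lies in `(x, v]`. -/
def rowCount (c : ℕ) (f : ℕ → ℕ) (x v : ℕ) : ℕ :=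
  ((Finset.range c).filter (fun t => x < f t ∧ f t ≤ v)).card

/-- The balanced-interval condition characterizing the greedy matching. -/
def Bal (c : ℕ) (T : ℕ → ℕ → ℕ) (i x y : ℕ) : Prop :=
  x < y ∧ rowCount c (T i) x (y-1) = rowCount c (T (i+1)) x (y-1) ∧
    ∀ v, v < y → rowCount c (T (i+1)) x v ≤ rowCount c (T i) x v

section TwoRow
variable {c : ℕ} {T : ℕ → ℕ → ℕ} {i : ℕ}

lemma partnerList_succ (j : ℕ) :
    partnerList c T i (j+1) = partnerList c T i j ++
      [((List.range c).filter
        (fun j' => decide (T i j' ≤ T (i + 1) j ∧ j' ∉ partnerList c T i j))).foldr max 0] := rfl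

lemma partnerList_length (j : ℕ) : (partnerList c T i j).length = j := by
  induction j with
  | zero => rfl
  | succ j ih => rw [partnerList_succ]; simp [ih]

lemma partnerList_prefix {j k : ℕ} (h : j ≤ k) :
    partnerList c T i j <+: partnerList c T i k := by
  induction h with
  | refl => exact List.prefix_rfl
  | step h ih => exact ih.trans (by rw [partnerList_succ]; exact List.prefix_append _ _)

lemma partnerCol_getD {j k : ℕ} (h : j < k) :
    (partnerList c T i k).getD j 0 = partnerCol c T i j := by
  obtain ⟨l, hl⟩ := partnerList_prefix (c := c) (T := T) (i := i) (show j + 1 ≤ k from h)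
  rw [← hl, partnerCol]
  rw [List.getD_append]
  rw [partnerList_length]; omega

lemma partnerList_getD_eq (j : ℕ) :
    partnerList c T i (j+1) = partnerList c T i j ++ [partnerCol c T i j] := by
  rw [partnerList_succ, partnerCol, partnerList_succ]
  congr 1
  rw [List.getD_append_right, partnerList_length, Nat.sub_self]
  · rfl
  · rw [partnerList_length]

lemma mem_partnerList_iff {t j : ℕ} :
    t ∈ partnerList c T i j ↔ ∃ m, m < j ∧ partnerCol c T i m = t := by
  induction j with
  | zero => simp [partnerList]
  | succ j ih =>
    rw [partnerList_getD_eq]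
    simp only [List.mem_append, List.mem_singleton, ih]
    constructor
    · rintro (⟨m, hm, rfl⟩ | rfl)
      · exact ⟨m, by omega, rfl⟩
      · exact ⟨j, by omega, rfl⟩
    · rintro ⟨m, hm, rfl⟩
      rcases Nat.lt_succ_iff_lt_or_eq.1 hm with h | rfl
      · exact Or.inl ⟨m, h, rfl⟩
      · exact Or.inr rfl

variable (hf : ∀ ⦃t t'⦄, t < t' → t' < c → T i t < T i t')
  (hfg : ∀ ⦃t⦄, t < c → T i t < T (i+1) t)

include hf hfg in
/-- Existence of an unused candidate column for the greedy matching. -/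
lemma partner_filter_nonempty {j : ℕ} (hj : j < c) :
    ∃ t, t ∈ (List.range c).filter
      (fun j' => decide (T i j' ≤ T (i + 1) j ∧ j' ∉ partnerList c T i j)) := by
  classical
  have hcard : ((partnerList c T i j).toFinset).card ≤ j := by
    calc ((partnerList c T i j).toFinset).card ≤ (partnerList c T i j).length :=
          List.toFinset_card_le _
    _ = j := partnerList_length j
  have : ∃ t ∈ Finset.range (j+1), t ∉ (partnerList c T i j).toFinset := by
    by_contra h
    push_neg at h
    have hsub : Finset.range (j+1) ⊆ (partnerList c T i j).toFinset := fun x hx => h x hx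
    have := Finset.card_le_card hsub
    rw [Finset.card_range] at this
    omega
  obtain ⟨t, ht1, ht2⟩ := this
  rw [Finset.mem_range] at ht1
  refine ⟨t, ?_⟩
  rw [List.mem_filter]
  constructor
  · exact List.mem_range.2 (by omega)
  · rw [decide_eq_true_iff]
    refine ⟨?_, by simpa using ht2⟩
    rcases Nat.lt_succ_iff_lt_or_eq.1 ht1 with h | rfl
    · exact le_of_lt (lt_trans (hf h hj) (hfg hj))
    · exact le_of_lt (hfg hj)

include hf hfg in
lemma partnerCol_spec {j : ℕ} (hj : j < c) :
    partnerCol c T i j < c ∧ partnerCol c T i j ∉ partnerList c T i j ∧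
    T i (partnerCol c T i j) ≤ T (i+1) j ∧
    (∀ t, t < c → T i t ≤ T (i+1) j → t ∉ partnerList c T i j → t ≤ partnerCol c T i j) := by
  classical
  obtain ⟨t0, ht0⟩ := partner_filter_nonempty hf hfg hj
  set F := (List.range c).filter
      (fun j' => decide (T i j' ≤ T (i + 1) j ∧ j' ∉ partnerList c T i j)) with hF
  have hFne : F ≠ [] := List.ne_nil_of_mem ht0
  have hmax : F.foldr max 0 ∈ F := foldr_max_mem F hFne
  have hpc : partnerCol c T i j = F.foldr max 0 := by
    rw [partnerCol, partnerList_succ]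
    rw [List.getD_append_right, partnerList_length, Nat.sub_self]
    · rfl
    · rw [partnerList_length]
  rw [hpc]
  rw [List.mem_filter, decide_eq_true_iff] at hmax
  refine ⟨List.mem_range.1 hmax.1, hmax.2.2, hmax.2.1, ?_⟩
  intro t htc hle hnm
  apply foldr_max_le
  rw [List.mem_filter, decide_eq_true_iff]
  exact ⟨List.mem_range.2 htc, hle, hnm⟩

variable (hg : ∀ ⦃t t'⦄, t < t' → t' < c → T (i+1) t < T (i+1) t')
  (hdisj : ∀ ⦃t t'⦄, t < c → t' < c → T i t ≠ T (i+1) t')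

omit hf hfg in
include hf in
lemma row_lt_iff {t t' : ℕ} (ht : t < c) (ht' : t' < c) : T i t < T i t' ↔ t < t' := by
  constructor
  · intro h
    by_contra h'
    push_neg at h'
    rcases Nat.lt_or_ge t' t with h'' | h''
    · exact absurd (hf h'' ht) (by omega)
    · have ht'' : t = t' := by omega
      subst ht''; omega
  · exact fun h => hf h ht'

include hf hfg in
lemma partnerCol_lt {j : ℕ} (hj : j < c) : partnerCol c T i j < c :=
  (partnerCol_spec hf hfg hj).1

include hf hfg hdisj in
lemma partnerCol_val_lt {j : ℕ} (hj : j < c) :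
    T i (partnerCol c T i j) < T (i+1) j :=
  lt_of_le_of_ne (partnerCol_spec hf hfg hj).2.2.1
    (hdisj (partnerCol_lt hf hfg hj) hj)

include hf hfg in
lemma partnerCol_inj {m j : ℕ} (hm : m < j) (hj : j < c) :
    partnerCol c T i m ≠ partnerCol c T i j := by
  intro h
  have h1 : partnerCol c T i m ∈ partnerList c T i j :=
    mem_partnerList_iff.2 ⟨m, hm, rfl⟩
  rw [h] at h1
  exact (partnerCol_spec hf hfg hj).2.1 h1

include hf hfg in
lemma partnerCol_max {j t : ℕ} (hj : j < c) (ht : t < c)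
    (hle : T i t ≤ T (i+1) j) (hnm : ∀ m, m < j → partnerCol c T i m ≠ t) :
    t ≤ partnerCol c T i j := by
  apply (partnerCol_spec hf hfg hj).2.2.2 t ht hle
  intro hmem
  obtain ⟨m, hm, hpc⟩ := mem_partnerList_iff.1 hmem
  exact hnm m hm hpc

include hf hfg in
lemma partnerCol_surj {t : ℕ} (ht : t < c) : ∃ m, m < c ∧ partnerCol c T i m = t := by
  classical
  have := Finset.surj_on_of_inj_on_of_card_le (s := Finset.range c) (t := Finset.range c)
    (fun m _ => partnerCol c T i m)
    (fun m hm => Finset.mem_range.2 (partnerCol_lt hf hfg (Finset.mem_range.1 hm)))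
    (fun m1 m2 h1 h2 heq => by
      by_contra hne
      rcases Nat.lt_or_ge m1 m2 with h | h
      · exact partnerCol_inj hf hfg h (Finset.mem_range.1 h2) heq
      · exact partnerCol_inj hf hfg (by omega) (Finset.mem_range.1 h1) heq.symm)
    le_rfl
  obtain ⟨m, hm, heq⟩ := this t (Finset.mem_range.2 ht)
  exact ⟨m, Finset.mem_range.1 hm, heq.symm⟩

include hf hg hfg hdisj in
/-- matched pairs satisfy the balanced-interval condition: prefix part. -/
lemma matched_bal_prefix {j v : ℕ} (hj : j < c) (hv : v < T (i+1) j) :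
    rowCount c (T (i+1)) (T i (partnerCol c T i j)) v ≤
      rowCount c (T i) (T i (partnerCol c T i j)) v := by
  classical
  set x := T i (partnerCol c T i j) with hx
  apply Finset.card_le_card_of_injOn (fun m => partnerCol c T i m)
  · intro m hm
    simp only [Finset.mem_coe, Finset.mem_filter, Finset.mem_range] at hm ⊢
    obtain ⟨hmc, hxm, hmv⟩ := hm
    -- m < j
    have hmj : m < j := by
      by_contra h
      push_neg at h
      have : T (i+1) j ≤ T (i+1) m := by
        rcases Nat.lt_or_ge j m with h' | h'
        · exact le_of_lt (hg h' hmc)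
        · have : j = m := by omega
          subst this; rfl
      omega
    refine ⟨partnerCol_lt hf hfg hmc, ?_, ?_⟩
    · -- x < T i (pc m)
      by_contra h
      push_neg at h
      have hne : T i (partnerCol c T i m) ≠ x := by
        intro heq
        have := (row_lt_iff (T := T) (i := i) hf (partnerCol_lt hf hfg hmc)
          (partnerCol_lt hf hfg hj))
        have hinj : partnerCol c T i m = partnerCol c T i j := by
          by_contra hne2
          rcases Nat.lt_or_ge (partnerCol c T i m) (partnerCol c T i j) with h' | h'
          · have := hf h' (partnerCol_lt hf hfg hj); omega
          · have h'' : partnerCol c T i j < partnerCol c T i m := by omega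
            have := hf h'' (partnerCol_lt hf hfg hmc); omega
        exact partnerCol_inj hf hfg hmj hj hinj
      have hlt : T i (partnerCol c T i m) < x := lt_of_le_of_ne h hne
      -- maximality at m with candidate pc j
      have hle : T i (partnerCol c T i j) ≤ T (i+1) m := le_of_lt hxm
      have hmax := partnerCol_max hf hfg hmc (partnerCol_lt hf hfg hj) hle
        (fun m' hm' heq => partnerCol_inj hf hfg (lt_trans hm' hmj) hj heq)
      have := hf (lt_of_le_of_ne hmax ?_) (partnerCol_lt hf hfg hmc)
      · omega
      · intro heq
        rw [← heq] at hlt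
        omega
    · -- T i (pc m) ≤ v
      have h1 : T i (partnerCol c T i m) < T (i+1) m := partnerCol_val_lt hf hfg hdisj hmc
      omega
  · intro m1 h1 m2 h2 heq
    simp only [Finset.coe_filter, Set.mem_setOf_eq, Finset.mem_range] at h1 h2
    by_contra hne
    rcases Nat.lt_or_ge m1 m2 with h | h
    · exact partnerCol_inj hf hfg h h2.1 heq
    · exact partnerCol_inj hf hfg (by omega) h1.1 heq.symm

include hf hg hfg hdisj in
lemma matched_bal_opens_le {j : ℕ} (hj : j < c) :
    rowCount c (T i) (T i (partnerCol c T i j)) (T (i+1) j - 1) ≤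
      rowCount c (T (i+1)) (T i (partnerCol c T i j)) (T (i+1) j - 1) := by
  classical
  set x := T i (partnerCol c T i j) with hx
  have hy1 : 1 ≤ T (i+1) j := by
    have := partnerCol_val_lt hf hfg hdisj hj; omega
  apply Finset.card_le_card_of_surjOn (fun m => partnerCol c T i m)
  intro t ht
  simp only [Finset.coe_filter, Set.mem_setOf_eq, Finset.mem_range, Set.mem_image] at ht ⊢
  obtain ⟨htc, hxt, htv⟩ := ht
  -- t ∈ partnerList c T i j, else maximality forces T i t ≤ x
  have hmem : t ∈ partnerList c T i j := by
    by_contra h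
    have hle : T i t ≤ T (i+1) j := by omega
    have := (partnerCol_spec hf hfg hj).2.2.2 t htc hle h
    have : T i t ≤ x := by
      rcases Nat.lt_or_ge t (partnerCol c T i j) with h' | h'
      · exact le_of_lt (hf h' (partnerCol_lt hf hfg hj))
      · have : t = partnerCol c T i j := by omega
        subst this; rfl
    omega
  obtain ⟨m, hm, hpc⟩ := mem_partnerList_iff.1 hmem
  refine ⟨m, ⟨by omega, ?_, ?_⟩, hpc⟩
  · -- x < T (i+1) m
    have : T i (partnerCol c T i m) < T (i+1) m :=
      partnerCol_val_lt hf hfg hdisj (by omega)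
    rw [hpc] at this
    omega
  · -- T (i+1) m ≤ y - 1
    have : T (i+1) m < T (i+1) j := hg hm hj
    omega

include hf hg hfg hdisj in
/-- Greedy-matched pairs satisfy the balanced-interval condition. -/
lemma matched_bal {j : ℕ} (hj : j < c) :
    Bal c T i (T i (partnerCol c T i j)) (T (i+1) j) := by
  have hy1 : T i (partnerCol c T i j) < T (i+1) j := partnerCol_val_lt hf hfg hdisj hj
  refine ⟨hy1, ?_, fun v hv => matched_bal_prefix hf hfg hg hdisj hj hv⟩
  exact le_antisymm (matched_bal_opens_le hf hfg hg hdisj hj)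
    (matched_bal_prefix hf hfg hg hdisj hj (by omega))

omit hf hfg in
lemma rowCount_split (f : ℕ → ℕ) {x w v : ℕ} (h1 : x ≤ w) (h2 : w ≤ v) :
    rowCount c f x v = rowCount c f x w + rowCount c f w v := by
  classical
  have hdis : Disjoint ((Finset.range c).filter (fun t => x < f t ∧ f t ≤ w))
      ((Finset.range c).filter (fun t => w < f t ∧ f t ≤ v)) := by
    rw [Finset.disjoint_left]
    intro t ht1 ht2
    simp only [Finset.mem_filter] at ht1 ht2
    omega
  rw [rowCount, rowCount, rowCount, ← Finset.card_union_of_disjoint hdis]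
  congr 1
  ext t
  simp only [Finset.mem_filter, Finset.mem_union, Finset.mem_range]
  omega

include hf hg hfg hdisj in
lemma bal_not_lt {x x' y : ℕ} (hx' : ∃ t, t < c ∧ T i t = x')
    (h1 : Bal c T i x y) (h2 : Bal c T i x' y) (hlt : x < x') : False := by
  obtain ⟨t0, ht0c, ht0⟩ := hx'
  have hx'y : x' < y := h2.1
  have s1 : rowCount c (T i) x (y-1) =
      rowCount c (T i) x x' + rowCount c (T i) x' (y-1) :=
    rowCount_split (T i) (le_of_lt hlt) (by omega)
  have s2 : rowCount c (T (i+1)) x (y-1) =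
      rowCount c (T (i+1)) x x' + rowCount c (T (i+1)) x' (y-1) :=
    rowCount_split (T (i+1)) (le_of_lt hlt) (by omega)
  have eq3 : rowCount c (T i) x x' = rowCount c (T (i+1)) x x' := by
    have e1 := h1.2.1
    have e2 := h2.2.1
    omega
  have o_lt : rowCount c (T i) x (x'-1) < rowCount c (T i) x x' := by
    apply Finset.card_lt_card
    rw [Finset.ssubset_iff_of_subset]
    · exact ⟨t0, by simp only [Finset.mem_filter, Finset.mem_range]; omega,
        by simp only [Finset.mem_filter, Finset.mem_range]; omega⟩
    · intro t ht
      simp only [Finset.mem_filter, Finset.mem_range] at ht ⊢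
      omega
  have c_eq : rowCount c (T (i+1)) x (x'-1) = rowCount c (T (i+1)) x x' := by
    unfold rowCount
    congr 1
    ext t
    simp only [Finset.mem_filter, Finset.mem_range]
    constructor
    · intro h; exact ⟨h.1, h.2.1, by omega⟩
    · intro h
      refine ⟨h.1, h.2.1, ?_⟩
      have hne : x' ≠ T (i+1) t := by rw [← ht0]; exact hdisj ht0c h.1
      omega
  have pre := h1.2.2 (x'-1) (by omega)
  omega

include hf hg hfg hdisj in
lemma bal_unique {x x' y : ℕ} (hx : ∃ t, t < c ∧ T i t = x) (hx' : ∃ t, t < c ∧ T i t = x')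
    (h1 : Bal c T i x y) (h2 : Bal c T i x' y) : x = x' := by
  rcases Nat.lt_trichotomy x x' with h | h | h
  · exact absurd (bal_not_lt hf hfg hg hdisj hx' h1 h2 h) (by simp)
  · exact h
  · exact absurd (bal_not_lt hf hfg hg hdisj hx h2 h1 h) (by simp)

end TwoRow

/-! ## Structure lemmas for a rectangular SYT -/

section SYT

variable {r c : ℕ} {T : ℕ → ℕ → ℕ} (hr : 0 < r) (hc : 0 < c) (hT : IsRectSYT r c T)

include hT in
lemma syt_row_le {i j j' : ℕ} (h : j ≤ j') (hi : i < r) (hj' : j' < c) : T i j ≤ T i j' := by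
  induction j' with
  | zero =>
    have : j = 0 := by omega
    subst this; exact le_rfl
  | succ j' ih =>
    rcases Nat.lt_succ_iff_lt_or_eq.1 (Nat.lt_succ_of_le h) with h' | rfl
    · exact le_trans (ih (by omega) (by omega)) (le_of_lt (hT.1 i j' hi hj'))
    · rfl

include hT in
lemma syt_col_le {i i' j : ℕ} (h : i ≤ i') (hi' : i' < r) (hj : j < c) : T i j ≤ T i' j := by
  induction i' with
  | zero =>
    have : i = 0 := by omega
    subst this; exact le_rfl
  | succ i' ih =>
    rcases Nat.lt_succ_iff_lt_or_eq.1 (Nat.lt_succ_of_le h) with h' | rfl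
    · exact le_trans (ih (by omega) (by omega)) (le_of_lt (hT.2.1 i' j (by omega) hj))
    · rfl

include hT in
lemma syt_mono {i j i' j' : ℕ} (h1 : i ≤ i') (h2 : j ≤ j') (hne : (i,j) ≠ (i',j'))
    (hi' : i' < r) (hj' : j' < c) : T i j < T i' j' := by
  rcases Nat.lt_or_ge i i' with h | h
  · calc T i j ≤ T i j' := syt_row_le hT h2 (by omega) hj'
    _ < T i' j' := lt_of_lt_of_le (hT.2.1 i j' (by omega) hj') (syt_col_le hT h hi' hj')
  · have : i = i' := by omega
    subst this
    have : j < j' := by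
      rcases Nat.lt_or_ge j j' with h' | h'
      · exact h'
      · have hjj : j = j' := by omega
        subst hjj; exact absurd rfl hne
    calc T i j < T i (j+1) := hT.1 i j hi' (by omega)
    _ ≤ T i j' := syt_row_le hT (by omega) hi' hj'

include hr hc hT in
lemma syt_zero : T 0 0 = 1 := by
  obtain ⟨i, j, hi, hj, hv⟩ := hT.2.2.2 1 le_rfl (by nlinarith)
  rcases eq_or_ne ((0:ℕ),(0:ℕ)) (i,j) with h | h
  · injection h with h1 h2
    subst h1; subst h2; exact hv
  · have := syt_mono hT (Nat.zero_le i) (Nat.zero_le j) h hi hj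
    have := (hT.2.2.1 0 0 hr hc).1
    omega

include hr hc hT in
lemma syt_corner : T (r-1) (c-1) = r * c := by
  obtain ⟨i, j, hi, hj, hv⟩ := hT.2.2.2 (r*c) (by nlinarith) le_rfl
  rcases eq_or_ne (i,j) ((r-1),(c-1)) with h | h
  · injection h with h1 h2
    subst h1; subst h2; exact hv
  · have := syt_mono hT (show i ≤ r-1 by omega) (show j ≤ c-1 by omega) h
      (by omega) (by omega)
    have := (hT.2.2.1 (r-1) (c-1) (by omega) (by omega)).2
    omega

include hr hc hT in
lemma syt_inj {i j i' j' : ℕ} (hi : i < r) (hj : j < c) (hi' : i' < r) (hj' : j' < c)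
    (h : T i j = T i' j') : (i, j) = (i', j') := by
  classical
  have key := Finset.inj_on_of_surj_on_of_card_le
    (s := (Finset.range r) ×ˢ (Finset.range c)) (t := Finset.Icc 1 (r*c))
    (fun p _ => T p.1 p.2)
    (fun p hp => by
      simp only [Finset.mem_product, Finset.mem_range] at hp
      simp only [Finset.mem_Icc]
      exact hT.2.2.1 p.1 p.2 hp.1 hp.2)
    (fun v hv => by
      simp only [Finset.mem_Icc] at hv
      obtain ⟨a, b, ha, hb, hab⟩ := hT.2.2.2 v hv.1 hv.2
      exact ⟨(a,b), by simp [Finset.mem_product, ha, hb], hab⟩)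
    (by simp [Nat.card_Icc])
  exact key (by simp [Finset.mem_product, hi, hj]) (by simp [Finset.mem_product, hi', hj']) h

end SYT

section Path

variable {r c : ℕ} {T : ℕ → ℕ → ℕ} (hr : 0 < r) (hc : 0 < c)

include hr hc in
lemma slidePath_spec (k : ℕ) : (slidePath r c T k).1 < r ∧ (slidePath r c T k).2 < c ∧
    (slidePath r c T k).1 + (slidePath r c T k).2 = min k (r+c-2) := by
  induction k with
  | zero =>
    refine ⟨hr, hc, ?_⟩
    simp [slidePath]
  | succ k ih =>
    obtain ⟨h1, h2, h3⟩ := ih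
    rw [show slidePath r c T (k+1) = slideNext r c T (slidePath r c T k) from rfl]
    unfold slideNext
    split_ifs with hA hB hC hD <;> simp_all <;> omega

include hr hc in
lemma slidePath_corner {k : ℕ} (hk : r + c - 2 ≤ k) : slidePath r c T k = (r-1, c-1) := by
  obtain ⟨h1, h2, h3⟩ := slidePath_spec (T := T) hr hc k
  have : min k (r+c-2) = r+c-2 := by omega
  rw [this] at h3
  have e1 : (slidePath r c T k).1 = r - 1 := by omega
  have e2 : (slidePath r c T k).2 = c - 1 := by omega
  exact Prod.ext e1 e2

include hr hc in
lemma slidePath_inj {m k : ℕ} (hm : m ≤ r + c - 2) (hk : k ≤ r + c - 2)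
    (h : slidePath r c T m = slidePath r c T k) : m = k := by
  obtain ⟨_, _, h3⟩ := slidePath_spec (T := T) hr hc m
  obtain ⟨_, _, h3'⟩ := slidePath_spec (T := T) hr hc k
  rw [h] at h3
  omega

include hr hc in
lemma slide_step {k : ℕ} (hk : k < r + c - 2) :
    ((slidePath r c T (k+1)).1 = (slidePath r c T k).1 ∧
      (slidePath r c T (k+1)).2 = (slidePath r c T k).2 + 1) ∨
    ((slidePath r c T (k+1)).1 = (slidePath r c T k).1 + 1 ∧
      (slidePath r c T (k+1)).2 = (slidePath r c T k).2) := by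
  obtain ⟨h1, h2, h3⟩ := slidePath_spec (T := T) hr hc k
  rw [show slidePath r c T (k+1) = slideNext r c T (slidePath r c T k) from rfl]
  unfold slideNext
  split_ifs with hA hB hC hD <;> simp_all <;> omega

lemma sn_rr (p : ℕ × ℕ) (hA : p.1 + 1 < r ∧ p.2 + 1 < c)
    (hB : T p.1 (p.2 + 1) ≤ T (p.1 + 1) p.2) :
    slideNext r c T p = (p.1, p.2 + 1) := by
  unfold slideNext; rw [if_pos hA, if_pos hB]

lemma sn_dd (p : ℕ × ℕ) (hA : p.1 + 1 < r ∧ p.2 + 1 < c)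
    (hB : ¬ T p.1 (p.2 + 1) ≤ T (p.1 + 1) p.2) :
    slideNext r c T p = (p.1 + 1, p.2) := by
  unfold slideNext; rw [if_pos hA, if_neg hB]

lemma sn_r (p : ℕ × ℕ) (hA : ¬(p.1 + 1 < r ∧ p.2 + 1 < c)) (hC : p.2 + 1 < c) :
    slideNext r c T p = (p.1, p.2 + 1) := by
  unfold slideNext; rw [if_neg hA, if_pos hC]

lemma sn_d (p : ℕ × ℕ) (hA : ¬(p.1 + 1 < r ∧ p.2 + 1 < c)) (hC : ¬ p.2 + 1 < c)
    (hD : p.1 + 1 < r) : slideNext r c T p = (p.1 + 1, p.2) := by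
  unfold slideNext; rw [if_neg hA, if_neg hC, if_pos hD]

lemma sn_s (p : ℕ × ℕ) (hA : ¬(p.1 + 1 < r ∧ p.2 + 1 < c)) (hC : ¬ p.2 + 1 < c)
    (hD : ¬ p.1 + 1 < r) : slideNext r c T p = p := by
  unfold slideNext; rw [if_neg hA, if_neg hC, if_neg hD]

lemma downstep_cond {k : ℕ}
    (h : (slidePath r c T (k+1)).1 = (slidePath r c T k).1 + 1) :
    (slidePath r c T k).1 + 1 < r ∧
    (slidePath r c T (k+1)).2 = (slidePath r c T k).2 ∧
    ((slidePath r c T k).2 + 1 < c →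
      T ((slidePath r c T k).1 + 1) (slidePath r c T k).2 <
        T (slidePath r c T k).1 ((slidePath r c T k).2 + 1)) := by
  have hrw : slidePath r c T (k+1) = slideNext r c T (slidePath r c T k) := rfl
  rw [hrw] at h ⊢
  set p := slidePath r c T k with hp
  by_cases hA : p.1 + 1 < r ∧ p.2 + 1 < c
  · by_cases hB : T p.1 (p.2 + 1) ≤ T (p.1 + 1) p.2
    · rw [sn_rr p hA hB] at h; omega
    · rw [sn_dd p hA hB] at h ⊢
      exact ⟨hA.1, rfl, fun _ => by omega⟩
  · by_cases hC : p.2 + 1 < c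
    · rw [sn_r p hA hC] at h; omega
    · by_cases hD : p.1 + 1 < r
      · rw [sn_d p hA hC hD] at h ⊢
        exact ⟨hD, rfl, fun hc2 => absurd hc2 hC⟩
      · rw [sn_s p hA hC hD] at h; omega

lemma rightstep_cond {k : ℕ}
    (h : (slidePath r c T (k+1)).2 = (slidePath r c T k).2 + 1) :
    (slidePath r c T k).2 + 1 < c ∧
    (slidePath r c T (k+1)).1 = (slidePath r c T k).1 ∧
    ((slidePath r c T k).1 + 1 < r →
      T (slidePath r c T k).1 ((slidePath r c T k).2 + 1) ≤
        T ((slidePath r c T k).1 + 1) (slidePath r c T k).2) := by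
  have hrw : slidePath r c T (k+1) = slideNext r c T (slidePath r c T k) := rfl
  rw [hrw] at h ⊢
  set p := slidePath r c T k with hp
  by_cases hA : p.1 + 1 < r ∧ p.2 + 1 < c
  · by_cases hB : T p.1 (p.2 + 1) ≤ T (p.1 + 1) p.2
    · rw [sn_rr p hA hB] at h ⊢
      exact ⟨hA.2, rfl, fun _ => hB⟩
    · rw [sn_dd p hA hB] at h; omega
  · by_cases hC : p.2 + 1 < c
    · rw [sn_r p hA hC] at h ⊢
      refine ⟨hC, rfl, fun hd => absurd ⟨hd, hC⟩ hA⟩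
    · by_cases hD : p.1 + 1 < r
      · rw [sn_d p hA hC hD] at h; omega
      · rw [sn_s p hA hC hD] at h; omega

end Path

section Promote

variable {r c : ℕ} {T : ℕ → ℕ → ℕ} (hr : 0 < r) (hc : 0 < c) (hT : IsRectSYT r c T)

include hr hc in
lemma promote_corner : promote r c T (r-1) (c-1) = r * c := by
  unfold promote
  rw [if_pos (slidePath_corner (T := T) hr hc (by omega)).symm]

lemma promote_offpath {i j : ℕ} (h : ¬ ∃ k, slidePath r c T k = (i,j)) :
    promote r c T i j = T i j - 1 := by
  unfold promote
  rw [if_neg (fun heq => h ⟨r+c, heq.symm⟩), dif_neg h]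

include hr hc in
lemma promote_onpath {k i j : ℕ} (hk : k < r+c-2) (hpk : slidePath r c T k = (i,j)) :
    promote r c T i j =
      T (slidePath r c T (k+1)).1 (slidePath r c T (k+1)).2 - 1 := by
  unfold promote
  have hne : (i,j) ≠ slidePath r c T (r+c) := by
    rw [slidePath_corner (T := T) hr hc (by omega)]
    intro heq
    have := slidePath_inj (T := T) hr hc (le_of_lt hk) le_rfl
      (by rw [hpk, heq, slidePath_corner (T := T) hr hc le_rfl])
    omega
  rw [if_neg hne, dif_pos ⟨k, hpk⟩]
  have hfind : Nat.find (⟨k, hpk⟩ : ∃ m, slidePath r c T m = (i,j)) = k := by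
    rw [Nat.find_eq_iff]
    refine ⟨hpk, fun m hm heq => ?_⟩
    have := slidePath_inj (T := T) hr hc (by omega) (by omega) (heq.trans hpk.symm)
    omega
  rw [hfind]

include hr hc in
lemma onpath_index {i j : ℕ} (h : ∃ k, slidePath r c T k = (i,j))
    (hcor : (i,j) ≠ (r-1, c-1)) : ∃ k, k < r+c-2 ∧ slidePath r c T k = (i,j) := by
  obtain ⟨m, hm⟩ := h
  rcases Nat.lt_or_ge m (r+c-2) with h' | h'
  · exact ⟨m, h', hm⟩
  · rw [slidePath_corner (T := T) hr hc h'] at hm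
    exact absurd hm.symm hcor

include hr hc hT in
lemma path_val_lt {k : ℕ} (hk : k < r+c-2) :
    T (slidePath r c T k).1 (slidePath r c T k).2 <
    T (slidePath r c T (k+1)).1 (slidePath r c T (k+1)).2 := by
  obtain ⟨h1, h2, h3⟩ := slidePath_spec (T := T) hr hc k
  rcases slide_step (T := T) hr hc hk with ⟨e1, e2⟩ | ⟨e1, e2⟩
  · obtain ⟨hc2, _, _⟩ := rightstep_cond (T := T) e2
    rw [e1, e2]
    exact hT.1 _ _ h1 hc2
  · obtain ⟨hr2, _, _⟩ := downstep_cond (T := T) e1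
    rw [e1, e2]
    exact hT.2.1 _ _ hr2 h2

include hr hc hT in
lemma path_val_ge_two {k : ℕ} (hk : 1 ≤ k) (hk2 : k ≤ r+c-2) :
    2 ≤ T (slidePath r c T k).1 (slidePath r c T k).2 := by
  obtain ⟨h1, h2, h3⟩ := slidePath_spec (T := T) hr hc k
  have hne : slidePath r c T k ≠ (0,0) := by
    intro heq
    rw [heq] at h3
    simp at h3
    omega
  have h0 : T 0 0 = 1 := syt_zero hr hc hT
  have : T 0 0 < T (slidePath r c T k).1 (slidePath r c T k).2 := by
    apply syt_mono hT (Nat.zero_le _) (Nat.zero_le _) _ h1 h2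
    intro heq
    injection heq with e1 e2
    exact hne (Prod.ext e1.symm e2.symm)
  omega

include hr hc hT in
lemma promote_le {i j : ℕ} (hi : i < r) (hj : j < c) (hcor : (i,j) ≠ (r-1,c-1)) :
    promote r c T i j ≤ r * c - 1 := by
  by_cases h : ∃ k, slidePath r c T k = (i,j)
  · obtain ⟨k, hk, hpk⟩ := onpath_index hr hc h hcor
    rw [promote_onpath hr hc hk hpk]
    obtain ⟨g1, g2, _⟩ := slidePath_spec (T := T) hr hc (k+1)
    have := (hT.2.2.1 _ _ g1 g2).2
    omega
  · rw [promote_offpath h]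
    have := (hT.2.2.1 i j hi hj).2
    omega

lemma rightstep_cond' {k i j : ℕ} (hpk : slidePath r c T k = (i,j))
    (h : (slidePath r c T (k+1)).2 = j + 1) :
    j + 1 < c ∧ slidePath r c T (k+1) = (i, j+1) ∧
      (i + 1 < r → T i (j+1) ≤ T (i+1) j) := by
  have h2 : (slidePath r c T (k+1)).2 = (slidePath r c T k).2 + 1 := by rw [hpk]; exact h
  obtain ⟨hc2, he, hcond⟩ := rightstep_cond (T := T) h2
  rw [hpk] at hc2 he hcond
  exact ⟨hc2, Prod.ext (by simpa using he) (by simpa using h), fun hir => hcond hir⟩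

lemma downstep_cond' {k i j : ℕ} (hpk : slidePath r c T k = (i,j))
    (h : (slidePath r c T (k+1)).1 = i + 1) :
    i + 1 < r ∧ slidePath r c T (k+1) = (i+1, j) ∧
      (j + 1 < c → T (i+1) j < T i (j+1)) := by
  have h2 : (slidePath r c T (k+1)).1 = (slidePath r c T k).1 + 1 := by rw [hpk]; exact h
  obtain ⟨hr2, he, hcond⟩ := downstep_cond (T := T) h2
  rw [hpk] at hr2 he hcond
  exact ⟨hr2, Prod.ext (by simpa using h) (by simpa using he), fun hjc => hcond hjc⟩

include hr hc in
lemma slide_step' {k i j : ℕ} (hk : k < r + c - 2) (hpk : slidePath r c T k = (i,j)) :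
    (slidePath r c T (k+1)).2 = j + 1 ∨ (slidePath r c T (k+1)).1 = i + 1 := by
  rcases slide_step (T := T) hr hc hk with ⟨e1, e2⟩ | ⟨e1, e2⟩
  · rw [hpk] at e2; exact Or.inl (by simpa using e2)
  · rw [hpk] at e1; exact Or.inr (by simpa using e1)

include hr hc hT in
lemma promote_row_lt {i j : ℕ} (hi : i < r) (hj : j + 1 < c) :
    promote r c T i j < promote r c T i (j+1) := by
  have hrc : 1 ≤ r * c := Nat.mul_pos hr hc
  have hb1cor : (i,j) ≠ (r-1,c-1) := by
    intro h; injection h with e1 e2; omega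
  by_cases hb2 : ∃ k, slidePath r c T k = (i, j+1)
  · by_cases hcor : ((i:ℕ), j+1) = (r-1, c-1)
    · have hco : promote r c T i (j+1) = r * c := by
        rw [Prod.mk.injEq] at hcor
        rw [hcor.1, hcor.2]; exact promote_corner hr hc
      rw [hco]
      have := promote_le hr hc hT hi (by omega) hb1cor
      omega
    · obtain ⟨k2, hk2, hpk2⟩ := onpath_index hr hc hb2 hcor
      have hval2 : T i (j+1) < T (slidePath r c T (k2+1)).1 (slidePath r c T (k2+1)).2 := by
        have := path_val_lt hr hc hT hk2
        rw [hpk2] at this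
        exact this
      rw [promote_onpath hr hc hk2 hpk2]
      by_cases hb1 : ∃ k, slidePath r c T k = (i, j)
      · obtain ⟨k1, hk1, hpk1⟩ := onpath_index hr hc hb1 hb1cor
        rw [promote_onpath hr hc hk1 hpk1]
        rcases slide_step' hr hc hk1 hpk1 with e | e
        · obtain ⟨hc2, he, _⟩ := rightstep_cond' (T := T) hpk1 e
          rw [he]; dsimp only
          have h1 : 1 ≤ T i (j+1) := (hT.2.2.1 i (j+1) hi hc2).1
          omega
        · obtain ⟨hr2, he, hcond⟩ := downstep_cond' (T := T) hpk1 e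
          rw [he]; dsimp only
          have hlt : T (i+1) j < T i (j+1) := hcond hj
          have h1 : 1 ≤ T (i+1) j := (hT.2.2.1 _ _ hr2 (by omega)).1
          omega
      · rw [promote_offpath hb1]
        have := hT.1 i j hi hj
        omega
  · rw [promote_offpath hb2]
    by_cases hb1 : ∃ k, slidePath r c T k = (i, j)
    · obtain ⟨k1, hk1, hpk1⟩ := onpath_index hr hc hb1 hb1cor
      rw [promote_onpath hr hc hk1 hpk1]
      rcases slide_step' hr hc hk1 hpk1 with e | e
      · obtain ⟨hc2, he, _⟩ := rightstep_cond' (T := T) hpk1 e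
        exact absurd ⟨k1+1, he⟩ hb2
      · obtain ⟨hr2, he, hcond⟩ := downstep_cond' (T := T) hpk1 e
        rw [he]; dsimp only
        have hlt : T (i+1) j < T i (j+1) := hcond hj
        have h1 : 1 ≤ T (i+1) j := (hT.2.2.1 _ _ hr2 (by omega)).1
        omega
    · rw [promote_offpath hb1]
      have := hT.1 i j hi hj
      have h1 : 1 ≤ T i j := (hT.2.2.1 i j hi (by omega)).1
      omega

include hr hc hT in
lemma promote_col_lt {i j : ℕ} (hi : i + 1 < r) (hj : j < c) :
    promote r c T i j < promote r c T (i+1) j := by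
  have hrc : 1 ≤ r * c := Nat.mul_pos hr hc
  have hb1cor : (i,j) ≠ (r-1,c-1) := by
    intro h; injection h with e1 e2; omega
  by_cases hb2 : ∃ k, slidePath r c T k = (i+1, j)
  · by_cases hcor : ((i:ℕ)+1, j) = (r-1, c-1)
    · have hco : promote r c T (i+1) j = r * c := by
        rw [Prod.mk.injEq] at hcor
        rw [hcor.1, hcor.2]; exact promote_corner hr hc
      rw [hco]
      have := promote_le hr hc hT (by omega) hj hb1cor
      omega
    · obtain ⟨k2, hk2, hpk2⟩ := onpath_index hr hc hb2 hcor
      have hval2 : T (i+1) j < T (slidePath r c T (k2+1)).1 (slidePath r c T (k2+1)).2 := by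
        have := path_val_lt hr hc hT hk2
        rw [hpk2] at this
        exact this
      rw [promote_onpath hr hc hk2 hpk2]
      by_cases hb1 : ∃ k, slidePath r c T k = (i, j)
      · obtain ⟨k1, hk1, hpk1⟩ := onpath_index hr hc hb1 hb1cor
        rw [promote_onpath hr hc hk1 hpk1]
        rcases slide_step' hr hc hk1 hpk1 with e | e
        · obtain ⟨hc2, he, hcond⟩ := rightstep_cond' (T := T) hpk1 e
          rw [he]; dsimp only
          have hle : T i (j+1) ≤ T (i+1) j := hcond hi
          have hne : T i (j+1) ≠ T (i+1) j := by
            intro heq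
            have := syt_inj hr hc hT (by omega) hc2 hi hj heq
            injection this with a b
            omega
          have h1 : 1 ≤ T i (j+1) := (hT.2.2.1 i (j+1) (by omega) hc2).1
          omega
        · obtain ⟨hr2, he, _⟩ := downstep_cond' (T := T) hpk1 e
          rw [he]; dsimp only
          have h1 : 1 ≤ T (i+1) j := (hT.2.2.1 (i+1) j hr2 hj).1
          omega
      · rw [promote_offpath hb1]
        have := hT.2.1 i j hi hj
        omega
  · rw [promote_offpath hb2]
    by_cases hb1 : ∃ k, slidePath r c T k = (i, j)
    · obtain ⟨k1, hk1, hpk1⟩ := onpath_index hr hc hb1 hb1cor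
      rw [promote_onpath hr hc hk1 hpk1]
      rcases slide_step' hr hc hk1 hpk1 with e | e
      · obtain ⟨hc2, he, hcond⟩ := rightstep_cond' (T := T) hpk1 e
        rw [he]; dsimp only
        have hle : T i (j+1) ≤ T (i+1) j := hcond hi
        have hne : T i (j+1) ≠ T (i+1) j := by
          intro heq
          have := syt_inj hr hc hT (by omega) hc2 hi hj heq
          injection this with a b
          omega
        have h1 : 1 ≤ T i (j+1) := (hT.2.2.1 i (j+1) (by omega) hc2).1
        omega
      · obtain ⟨hr2, he, _⟩ := downstep_cond' (T := T) hpk1 e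
        exact absurd ⟨k1+1, he⟩ hb2
    · rw [promote_offpath hb1]
      have := hT.2.1 i j hi hj
      have h1 : 1 ≤ T i j := (hT.2.2.1 i j (by omega) hj).1
      omega

include hr hc hT in
lemma promote_bounds {i j : ℕ} (hi : i < r) (hj : j < c) :
    1 ≤ promote r c T i j ∧ promote r c T i j ≤ r * c := by
  have hrc : 1 ≤ r * c := Nat.mul_pos hr hc
  by_cases hcor : ((i:ℕ), j) = (r-1, c-1)
  · rw [Prod.mk.injEq] at hcor
    rw [hcor.1, hcor.2, promote_corner hr hc]
    omega
  · have hle := promote_le hr hc hT hi hj hcor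
    refine ⟨?_, by omega⟩
    by_cases h : ∃ k, slidePath r c T k = (i,j)
    · obtain ⟨k, hk, hpk⟩ := onpath_index hr hc h hcor
      rw [promote_onpath hr hc hk hpk]
      have := path_val_ge_two hr hc hT (k := k+1) (by omega) (by omega)
      omega
    · rw [promote_offpath h]
      have h1 := (hT.2.2.1 i j hi hj).1
      have h2 : T i j ≠ 1 := by
        intro heq
        have h0 : T 0 0 = 1 := syt_zero hr hc hT
        have := syt_inj hr hc hT hi hj hr hc (heq.trans h0.symm)
        rw [Prod.mk.injEq] at this
        exact h ⟨0, by rw [show slidePath r c T 0 = (0,0) from rfl, this.1, this.2]⟩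
      omega

include hr hc hT in
lemma promote_find {v : ℕ} (h1 : 1 ≤ v) (h2 : v ≤ r * c) :
    ∃ i j, i < r ∧ j < c ∧ promote r c T i j = v := by
  rcases eq_or_ne v (r * c) with rfl | hne
  · exact ⟨r-1, c-1, by omega, by omega, promote_corner hr hc⟩
  · obtain ⟨i, j, hi, hj, hv⟩ := hT.2.2.2 (v+1) (by omega) (by omega)
    by_cases h : ∃ k, slidePath r c T k = (i,j)
    · -- on path : v sits at the previous path box
      have hk : ∃ k, k ≤ r+c-2 ∧ slidePath r c T k = (i,j) := by
        obtain ⟨m, hm⟩ := h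
        rcases le_or_gt m (r+c-2) with h' | h'
        · exact ⟨m, h', hm⟩
        · refine ⟨r+c-2, le_rfl, ?_⟩
          rw [slidePath_corner (T := T) hr hc le_rfl]
          rw [← slidePath_corner (T := T) hr hc (le_of_lt h')]
          exact hm
      obtain ⟨k, hk2, hpk⟩ := hk
      have hk1 : 1 ≤ k := by
        rcases Nat.eq_zero_or_pos k with rfl | h'
        · have h0 : T 0 0 = 1 := syt_zero hr hc hT
          rw [show slidePath r c T 0 = (0,0) from rfl, Prod.mk.injEq] at hpk
          rw [← hpk.1, ← hpk.2] at hv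
          omega
        · exact h'
      obtain ⟨g1, g2, _⟩ := slidePath_spec (T := T) hr hc (k-1)
      refine ⟨(slidePath r c T (k-1)).1, (slidePath r c T (k-1)).2, g1, g2, ?_⟩
      have := promote_onpath (T := T) hr hc (k := k-1)
        (i := (slidePath r c T (k-1)).1) (j := (slidePath r c T (k-1)).2)
        (by omega) rfl
      rw [this, show k - 1 + 1 = k by omega, hpk]
      dsimp only
      omega
    · exact ⟨i, j, hi, hj, by rw [promote_offpath h]; omega⟩

include hr hc hT in
lemma promote_syt : IsRectSYT r c (promote r c T) :=
  ⟨fun i j hi hj => promote_row_lt hr hc hT hi hj,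
   fun i j hi hj => promote_col_lt hr hc hT hi hj,
   fun i j hi hj => promote_bounds hr hc hT hi hj,
   fun v h1 h2 => promote_find hr hc hT h1 h2⟩

include hr hc hT in
/-- If the box of `v` (with `v ≥ 2`) is not entered by a downward step of the sliding
path, then `v - 1` lies in the same row of `promote r c T` as `v` does in `T`. -/
lemma promote_row_mem {i j : ℕ} (hi : i < r) (hj : j < c) (h2 : 2 ≤ T i j)
    (hnd : ∀ k, k < r+c-2 → slidePath r c T (k+1) = (i,j) →
      (slidePath r c T (k+1)).1 = (slidePath r c T k).1 + 1 → False) :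
    ∃ j', j' < c ∧ promote r c T i j' = T i j - 1 := by
  by_cases h : ∃ k, slidePath r c T k = (i,j)
  · have hk : ∃ k, k ≤ r+c-2 ∧ slidePath r c T k = (i,j) := by
      obtain ⟨m, hm⟩ := h
      rcases le_or_gt m (r+c-2) with h' | h'
      · exact ⟨m, h', hm⟩
      · refine ⟨r+c-2, le_rfl, ?_⟩
        rw [slidePath_corner (T := T) hr hc le_rfl,
          ← slidePath_corner (T := T) hr hc (le_of_lt h')]
        exact hm
    obtain ⟨k, hk2, hpk⟩ := hk
    have hk1 : 1 ≤ k := by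
      rcases Nat.eq_zero_or_pos k with rfl | h'
      · have h0 : T 0 0 = 1 := syt_zero hr hc hT
        rw [show slidePath r c T 0 = (0,0) from rfl, Prod.mk.injEq] at hpk
        rw [← hpk.1, ← hpk.2] at h2
        omega
      · exact h'
    obtain ⟨g1, g2, _⟩ := slidePath_spec (T := T) hr hc (k-1)
    have hval : promote r c T (slidePath r c T (k-1)).1 (slidePath r c T (k-1)).2
        = T i j - 1 := by
      have := promote_onpath (T := T) hr hc (k := k-1)
        (i := (slidePath r c T (k-1)).1) (j := (slidePath r c T (k-1)).2)
        (by omega) rfl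
      rw [this, show k - 1 + 1 = k by omega, hpk]
    -- the step into (i,j) is a right step
    have hrow : (slidePath r c T (k-1)).1 = i := by
      rcases slide_step (T := T) hr hc (k := k-1) (by omega) with ⟨e1, e2⟩ | ⟨e1, e2⟩
      · rw [show k - 1 + 1 = k by omega] at e1
        rw [hpk] at e1
        exact e1.symm
      · exfalso
        refine hnd (k-1) (by omega) ?_ ?_
        · rw [show k - 1 + 1 = k by omega]; exact hpk
        · exact e1
    refine ⟨(slidePath r c T (k-1)).2, g2, ?_⟩
    rw [hrow] at hval
    exact hval
  · exact ⟨j, hj, by rw [promote_offpath h]⟩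

end Promote

section Diagram

variable {r c : ℕ} {T : ℕ → ℕ → ℕ} (hr : 0 < r) (hc : 0 < c) (hT : IsRectSYT r c T)

lemma mem_mDiagram {p : ℕ × ℕ} :
    p ∈ mDiagram r c T ↔ ∃ i m, i < r - 1 ∧ m < c ∧
      p = (T i (partnerCol c T i m), T (i+1) m) := by
  unfold mDiagram
  rw [Finset.mem_image]
  constructor
  · rintro ⟨q, hq, rfl⟩
    rw [Finset.mem_product, Finset.mem_range, Finset.mem_range] at hq
    exact ⟨q.1, q.2, hq.1, hq.2, rfl⟩
  · rintro ⟨i, m, h1, h2, rfl⟩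
    exact ⟨(i, m), by rw [Finset.mem_product]; simp [Finset.mem_range, h1, h2], rfl⟩

include hT in
lemma syt_hf {i : ℕ} (hi : i < r) : ∀ ⦃t t'⦄, t < t' → t' < c → T i t < T i t' := by
  intro t t' h h'
  refine syt_mono hT le_rfl h.le ?_ hi h'
  intro e; injection e with e1 e2; omega

include hT in
lemma syt_hg {i : ℕ} (hi : i < r - 1) : ∀ ⦃t t'⦄, t < t' → t' < c → T (i+1) t < T (i+1) t' :=
  syt_hf hT (by omega)

include hT in
lemma syt_hfg {i : ℕ} (hi : i < r - 1) : ∀ ⦃t⦄, t < c → T i t < T (i+1) t :=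
  fun t ht => hT.2.1 i t (by omega) ht

include hr hc hT in
lemma syt_hdisj {i : ℕ} (hi : i < r - 1) :
    ∀ ⦃t t'⦄, t < c → t' < c → T i t ≠ T (i+1) t' := by
  intro t t' ht ht' heq
  have := syt_inj hr hc hT (by omega) ht (by omega) ht' heq
  injection this with e1 e2
  omega

include hr hc hT in
lemma arc_lt {i m : ℕ} (hi : i < r - 1) (hm : m < c) :
    T i (partnerCol c T i m) < T (i+1) m :=
  partnerCol_val_lt (syt_hf hT (by omega)) (syt_hfg hT hi) (syt_hdisj hr hc hT hi) hm

include hr hc hT in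
/-- An arc of the m-diagram is uniquely determined by its right endpoint,
and determines the pair `(i, m)`. -/
lemma arc_right_unique {i m i' m' : ℕ} (hi : i < r - 1) (hm : m < c)
    (hi' : i' < r - 1) (hm' : m' < c) (h : T (i+1) m = T (i'+1) m') :
    i = i' ∧ m = m' := by
  have := syt_inj hr hc hT (by omega) hm (by omega) hm' h
  injection this with e1 e2
  exact ⟨by omega, e2⟩

include hr hc hT in
/-- An arc of the m-diagram is uniquely determined by its left endpoint. -/
lemma arc_left_unique {i m i' m' : ℕ} (hi : i < r - 1) (hm : m < c)
    (hi' : i' < r - 1) (hm' : m' < c)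
    (h : T i (partnerCol c T i m) = T i' (partnerCol c T i' m')) :
    i = i' ∧ m = m' := by
  have hp1 : partnerCol c T i m < c :=
    partnerCol_lt (syt_hf hT (by omega)) (syt_hfg hT hi) hm
  have hp2 : partnerCol c T i' m' < c :=
    partnerCol_lt (syt_hf hT (by omega)) (syt_hfg hT hi') hm'
  have := syt_inj hr hc hT (by omega) hp1 (by omega) hp2 h
  injection this with e1 e2
  subst e1
  refine ⟨rfl, ?_⟩
  by_contra hne
  rcases Nat.lt_or_ge m m' with h' | h'
  · exact partnerCol_inj (syt_hf hT (by omega)) (syt_hfg hT hi) h' hm' e2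
  · exact partnerCol_inj (syt_hf hT (by omega)) (syt_hfg hT hi) (by omega) hm e2.symm

end Diagram

section Block

variable {r c : ℕ} {T : ℕ → ℕ → ℕ} (hr : 0 < r) (hc : 0 < c) (hT : IsRectSYT r c T)

lemma step_cases (k : ℕ) : slidePath r c T (k+1) = slidePath r c T k ∨
    (slidePath r c T (k+1)).2 = (slidePath r c T k).2 + 1 ∨
    (slidePath r c T (k+1)).1 = (slidePath r c T k).1 + 1 := by
  have hrw : slidePath r c T (k+1) = slideNext r c T (slidePath r c T k) := rfl
  set p := slidePath r c T k with hp
  by_cases hA : p.1 + 1 < r ∧ p.2 + 1 < c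
  · by_cases hB : T p.1 (p.2 + 1) ≤ T (p.1 + 1) p.2
    · rw [hrw, sn_rr p hA hB]; right; left; rfl
    · rw [hrw, sn_dd p hA hB]; right; right; rfl
  · by_cases hC : p.2 + 1 < c
    · rw [hrw, sn_r p hA hC]; right; left; rfl
    · by_cases hD : p.1 + 1 < r
      · rw [hrw, sn_d p hA hC hD]; right; right; rfl
      · rw [hrw, sn_s p hA hC hD]; left; rfl

variable {a b : ℕ}

include hr hc hT in
/-- If the sliding path has made no downward step into the value window `[a,b]` up to
time `k`, but sits at a window value at time `k` above the bottom row, then it entered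
its current row from a column `j0` with `T i j0 < a ≤ T (i+1) j0`. -/
lemma path_entry (ha : 2 ≤ a) : ∀ k : ℕ,
    (∀ m, m + 1 ≤ k → (slidePath r c T (m+1)).1 = (slidePath r c T m).1 + 1 →
      ¬(a ≤ T (slidePath r c T (m+1)).1 (slidePath r c T (m+1)).2 ∧
        T (slidePath r c T (m+1)).1 (slidePath r c T (m+1)).2 ≤ b)) →
    a ≤ T (slidePath r c T k).1 (slidePath r c T k).2 →
    T (slidePath r c T k).1 (slidePath r c T k).2 ≤ b →
    (slidePath r c T k).1 + 1 < r →
    ∃ j0, j0 < (slidePath r c T k).2 ∧ T (slidePath r c T k).1 j0 < a ∧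
      a ≤ T ((slidePath r c T k).1 + 1) j0 := by
  intro k
  induction k with
  | zero =>
    intro _ hge _ _
    have h0 : T 0 0 = 1 := syt_zero hr hc hT
    rw [show slidePath r c T 0 = (0,0) from rfl] at hge
    dsimp at hge
    omega
  | succ k ih =>
    intro hno hge hle hrow
    rcases step_cases (T := T) k with he | he | he
    · rw [he] at hge hle hrow ⊢
      exact ih (fun m hm => hno m (by omega)) hge hle hrow
    · obtain ⟨hc2, heq, hcond⟩ := rightstep_cond' (T := T)
        (k := k) (i := (slidePath r c T k).1) (j := (slidePath r c T k).2) rfl he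
      rw [heq] at hge hle hrow ⊢
      dsimp only at hge hle hrow ⊢
      have hTle : T (slidePath r c T k).1 ((slidePath r c T k).2 + 1) ≤
          T ((slidePath r c T k).1 + 1) (slidePath r c T k).2 := hcond hrow
      obtain ⟨g1, g2, _⟩ := slidePath_spec (T := T) hr hc k
      by_cases hu : T (slidePath r c T k).1 (slidePath r c T k).2 < a
      · exact ⟨(slidePath r c T k).2, by omega, hu, by omega⟩
      · have hlt : T (slidePath r c T k).1 (slidePath r c T k).2 <
            T (slidePath r c T k).1 ((slidePath r c T k).2 + 1) :=
          hT.1 _ _ g1 hc2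
        obtain ⟨j0, hj0, hja, hjb⟩ := ih (fun m hm => hno m (by omega))
          (by omega) (by omega) hrow
        exact ⟨j0, by omega, hja, hjb⟩
    · exact absurd ⟨hge, hle⟩ (hno k le_rfl he)

variable {C : Finset (ℕ × ℕ)}

lemma mem_endpoints {y : ℕ} : y ∈ endpoints C ↔ ∃ q ∈ C, q.1 = y ∨ q.2 = y := by
  unfold endpoints
  rw [Finset.mem_union, Finset.mem_image, Finset.mem_image]
  constructor
  · rintro (⟨q, hq, rfl⟩ | ⟨q, hq, rfl⟩)
    · exact ⟨q, hq, Or.inl rfl⟩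
    · exact ⟨q, hq, Or.inr rfl⟩
  · rintro ⟨q, hq, rfl | rfl⟩
    · exact Or.inl ⟨q, hq, rfl⟩
    · exact Or.inr ⟨q, hq, rfl⟩

variable (hsub : IsPreSubdiagram (mDiagram r c T) C)
  (hepts : endpoints C = Finset.Icc a b)

include hsub hepts in
/-- Any arc of the m-diagram with an endpoint in the window belongs to `C`. -/
lemma arc_mem_C {y : ℕ} (hy : a ≤ y ∧ y ≤ b) {p : ℕ × ℕ}
    (hp : p ∈ mDiagram r c T) (hpy : p.1 = y ∨ p.2 = y) : p ∈ C := by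
  have hyep : y ∈ endpoints C := by rw [hepts, Finset.mem_Icc]; exact hy
  obtain ⟨q, hq, hqy⟩ := mem_endpoints.1 hyep
  apply hsub.2.2.1 p hp q hq
  unfold SharesEndpoint
  rcases hpy with h | h <;> rcases hqy with h' | h' <;>
    simp [h, h'.symm]

include hr hc hT hsub hepts in
/-- The upward partner of a window closer lies in the window. -/
lemma arcC {i m : ℕ} (hi : i < r - 1) (hm : m < c)
    (hy : a ≤ T (i+1) m ∧ T (i+1) m ≤ b) :
    (T i (partnerCol c T i m), T (i+1) m) ∈ C ∧
      a ≤ T i (partnerCol c T i m) ∧ T i (partnerCol c T i m) ≤ b := by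
  have hmem : (T i (partnerCol c T i m), T (i+1) m) ∈ mDiagram r c T :=
    mem_mDiagram.2 ⟨i, m, hi, hm, rfl⟩
  have hC := arc_mem_C hsub hepts hy hmem (Or.inr rfl)
  refine ⟨hC, ?_⟩
  have : T i (partnerCol c T i m) ∈ endpoints C := mem_endpoints.2 ⟨_, hC, Or.inl rfl⟩
  rw [hepts, Finset.mem_Icc] at this
  exact this

include hr hc hT hsub hepts in
/-- Key lemma: the sliding path never takes a downward step into the value
window `[a,b]` of a uniform sub-diagram. -/
lemma downstep_out (ha : 2 ≤ a) : ∀ k : ℕ, k < r + c - 2 →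
    (slidePath r c T (k+1)).1 = (slidePath r c T k).1 + 1 →
    a ≤ T (slidePath r c T (k+1)).1 (slidePath r c T (k+1)).2 →
    T (slidePath r c T (k+1)).1 (slidePath r c T (k+1)).2 ≤ b → False := by
  intro k
  induction k using Nat.strong_induction_on with
  | _ k IH =>
    intro hk hdown hge hle
    obtain ⟨hir, heq, hcond⟩ := downstep_cond' (T := T)
      (k := k) (i := (slidePath r c T k).1) (j := (slidePath r c T k).2) rfl hdown
    set i := (slidePath r c T k).1 with hi
    set j := (slidePath r c T k).2 with hj
    rw [heq] at hge hle
    dsimp only at hge hle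
    obtain ⟨g1, g2, _⟩ := slidePath_spec (T := T) hr hc k
    rw [← hi] at g1
    rw [← hj] at g2
    have hir' : i < r - 1 := by omega
    -- the two column sets
    set O := (Finset.range c).filter (fun t => a ≤ T i t ∧ T i t ≤ T (i+1) j) with hO
    set Cl := (Finset.range c).filter
      (fun t => a ≤ T (i+1) t ∧ T (i+1) t ≤ T (i+1) j) with hCl
    have claim1 : Cl.card ≤ O.card := by
      apply Finset.card_le_card_of_injOn (fun t => partnerCol c T i t)
      · intro t ht
        rw [hCl, Finset.mem_coe, Finset.mem_filter, Finset.mem_range] at ht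
        obtain ⟨htc, ht1, ht2⟩ := ht
        obtain ⟨hCmem, hx1, hx2⟩ := arcC hr hc hT hsub hepts hir' htc ⟨ht1, by omega⟩
        dsimp only
        rw [hO, Finset.mem_coe, Finset.mem_filter, Finset.mem_range]
        have hlt : T i (partnerCol c T i t) < T (i+1) t := arc_lt hr hc hT hir' htc
        exact ⟨partnerCol_lt (syt_hf hT (by omega)) (syt_hfg hT hir') htc, hx1, by omega⟩
      · intro t1 h1 t2 h2 hpc
        rw [hCl, Finset.coe_filter] at h1 h2
        simp only [Set.mem_setOf_eq, Finset.mem_range] at h1 h2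
        by_contra hne
        rcases Nat.lt_or_ge t1 t2 with h' | h'
        · exact partnerCol_inj (syt_hf hT (by omega)) (syt_hfg hT hir') h' h2.1 hpc
        · exact partnerCol_inj (syt_hf hT (by omega)) (syt_hfg hT hir')
            (by omega) h1.1 hpc.symm
    have hsubOCl : O ⊆ Cl := by
      intro t ht
      rw [hO, Finset.mem_filter, Finset.mem_range] at ht
      obtain ⟨htc, ht1, ht2⟩ := ht
      have htj : t ≤ j := by
        by_contra hgt
        push_neg at hgt
        have hc2 : j + 1 < c := by omega
        have h3 : T (i+1) j < T i (j+1) := hcond hc2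
        have h4 : T i (j+1) ≤ T i t := syt_row_le hT (by omega) g1 htc
        omega
      rw [hCl, Finset.mem_filter, Finset.mem_range]
      have h5 : T (i+1) t ≤ T (i+1) j := syt_row_le hT htj (by omega) g2
      have h6 : T i t < T (i+1) t := hT.2.1 i t (by omega) htc
      exact ⟨htc, by omega, h5⟩
    have claim2 : O.card < Cl.card := by
      apply Finset.card_lt_card
      rw [Finset.ssubset_iff_of_subset hsubOCl]
      by_cases hu : T i j < a
      · refine ⟨j, ?_, ?_⟩
        · rw [hCl, Finset.mem_filter, Finset.mem_range]
          exact ⟨g2, hge, le_rfl⟩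
        · rw [hO, Finset.mem_filter]
          intro hmem
          exact absurd hmem.2.1 (by omega)
      · push_neg at hu
        have hub : T i j ≤ b := by
          have : T i j < T (i+1) j := hT.2.1 i j (by omega) g2
          omega
        obtain ⟨j0, hj0, hja, hjb⟩ := path_entry hr hc hT ha k
          (fun m hm hd hval => IH m (by omega) (by omega) hd hval.1 hval.2)
          hu hub hir
        rw [← hi] at hja hjb
        rw [← hj] at hj0
        refine ⟨j0, ?_, ?_⟩
        · rw [hCl, Finset.mem_filter, Finset.mem_range]
          have : T (i+1) j0 < T (i+1) j := syt_hg hT hir' hj0 g2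
          exact ⟨by omega, hjb, by omega⟩
        · rw [hO, Finset.mem_filter]
          intro hmem
          exact absurd hmem.2.1 (by omega)
    omega

include hr hc hT hsub hepts in
lemma block_row_mem {i j : ℕ} (ha : 2 ≤ a) (hi : i < r) (hj : j < c)
    (hv : a ≤ T i j ∧ T i j ≤ b) :
    ∃ j', j' < c ∧ promote r c T i j' = T i j - 1 := by
  apply promote_row_mem hr hc hT hi hj (by omega)
  intro k hk heq hd
  refine downstep_out hr hc hT hsub hepts ha k hk hd ?_ ?_ <;> rw [heq] <;> dsimp only
  · exact hv.1
  · exact hv.2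

include hr hc hT hsub hepts in
lemma window_le : b ≤ r * c ∧ a ≤ b := by
  obtain ⟨q, hq⟩ := hsub.2.1
  have hq1 : q.1 ∈ endpoints C := mem_endpoints.2 ⟨q, hq, Or.inl rfl⟩
  rw [hepts, Finset.mem_Icc] at hq1
  have hab : a ≤ b := by omega
  have hb : b ∈ endpoints C := by rw [hepts, Finset.mem_Icc]; omega
  obtain ⟨p, hp, hpb⟩ := mem_endpoints.1 hb
  obtain ⟨i, m, hi, hm, hrep⟩ := mem_mDiagram.1 (hsub.1 hp)
  subst hrep
  refine ⟨?_, hab⟩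
  rcases hpb with h | h
  · rw [← h]
    dsimp only
    have hlt : partnerCol c T i m < c :=
      partnerCol_lt (syt_hf hT (by omega)) (syt_hfg hT hi) hm
    exact (hT.2.2.1 i _ (by omega) hlt).2
  · rw [← h]
    dsimp only
    exact (hT.2.2.1 (i+1) m (by omega) hm).2

include hr hc hT hsub hepts in
lemma block_row_iff {i v : ℕ} (ha : 2 ≤ a) (hi : i < r) (hv1 : a ≤ v) (hv2 : v ≤ b) :
    (∃ j, j < c ∧ T i j = v) ↔ (∃ j, j < c ∧ promote r c T i j = v - 1) := by
  constructor
  · rintro ⟨j, hj, rfl⟩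
    exact block_row_mem hr hc hT hsub hepts ha hi hj ⟨hv1, hv2⟩
  · rintro ⟨j, hj, hval⟩
    have hbrc := (window_le hr hc hT hsub hepts).1
    obtain ⟨i0, j0, hi0, hj0, hv0⟩ := hT.2.2.2 v (by omega) (by omega)
    obtain ⟨j1, hj1, hval1⟩ := block_row_mem hr hc hT hsub hepts ha hi0 hj0
      (by rw [hv0]; exact ⟨hv1, hv2⟩)
    rw [hv0] at hval1
    have hP := promote_syt hr hc hT
    have := syt_inj hr hc hP hi0 hj1 hi hj (hval1.trans hval.symm)
    rw [Prod.mk.injEq] at this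
    exact ⟨j0, hj0, by rw [← this.1]; exact hv0⟩

lemma rowCount_shift_le {f g : ℕ → ℕ} {x v : ℕ}
    (hwit : ∀ t, t < c → x < f t → f t ≤ v → ∃ t', t' < c ∧ g t' = f t + 1)
    (hfinj : ∀ t t', t < c → t' < c → f t = f t' → t = t') :
    rowCount c f x v ≤ rowCount c g (x+1) (v+1) := by
  classical
  apply Finset.card_le_card_of_injOn (fun t =>
    if h : t < c ∧ x < f t ∧ f t ≤ v then (hwit t h.1 h.2.1 h.2.2).choose else 0)
  · intro t ht
    rw [Finset.mem_coe, Finset.mem_filter, Finset.mem_range] at ht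
    obtain ⟨htc, ht1, ht2⟩ := ht
    dsimp only
    rw [dif_pos ⟨htc, ht1, ht2⟩]
    obtain ⟨hlt, heq⟩ := (hwit t htc ht1 ht2).choose_spec
    rw [Finset.mem_coe, Finset.mem_filter, Finset.mem_range, heq]
    exact ⟨hlt, by omega, by omega⟩
  · intro t1 h1 t2 h2 heq
    rw [Finset.coe_filter] at h1 h2
    simp only [Set.mem_setOf_eq, Finset.mem_range] at h1 h2
    dsimp only at heq
    rw [dif_pos ⟨h1.1, h1.2⟩, dif_pos ⟨h2.1, h2.2⟩] at heq
    have e1 := (hwit t1 h1.1 h1.2.1 h1.2.2).choose_spec.2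
    have e2 := (hwit t2 h2.1 h2.2.1 h2.2.2).choose_spec.2
    rw [heq] at e1
    rw [e1] at e2
    exact hfinj t1 t2 h1.1 h2.1 (by omega)

lemma rowCount_shift_ge {f g : ℕ → ℕ} {x v : ℕ}
    (hwit : ∀ t, t < c → x + 1 < f t → f t ≤ v + 1 → ∃ t', t' < c ∧ g t' = f t - 1)
    (hfinj : ∀ t t', t < c → t' < c → f t = f t' → t = t') :
    rowCount c f (x+1) (v+1) ≤ rowCount c g x v := by
  classical
  apply Finset.card_le_card_of_injOn (fun t =>
    if h : t < c ∧ x + 1 < f t ∧ f t ≤ v + 1 then (hwit t h.1 h.2.1 h.2.2).choose else 0)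
  · intro t ht
    rw [Finset.mem_coe, Finset.mem_filter, Finset.mem_range] at ht
    obtain ⟨htc, ht1, ht2⟩ := ht
    dsimp only
    rw [dif_pos ⟨htc, ht1, ht2⟩]
    obtain ⟨hlt, heq⟩ := (hwit t htc ht1 ht2).choose_spec
    rw [Finset.mem_coe, Finset.mem_filter, Finset.mem_range, heq]
    exact ⟨hlt, by omega, by omega⟩
  · intro t1 h1 t2 h2 heq
    rw [Finset.coe_filter] at h1 h2
    simp only [Set.mem_setOf_eq, Finset.mem_range] at h1 h2
    dsimp only at heq
    rw [dif_pos ⟨h1.1, h1.2⟩, dif_pos ⟨h2.1, h2.2⟩] at heq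
    have e1 := (hwit t1 h1.1 h1.2.1 h1.2.2).choose_spec.2
    have e2 := (hwit t2 h2.1 h2.2.1 h2.2.2).choose_spec.2
    rw [heq] at e1
    rw [e1] at e2
    exact hfinj t1 t2 h1.1 h2.1 (by omega)

include hr hc hT hsub hepts in
lemma rowCount_promote_eq {i x v : ℕ} (ha : 2 ≤ a) (hi : i < r)
    (hax : a - 1 ≤ x) (hvb : v ≤ b - 1) :
    rowCount c (promote r c T i) x v = rowCount c (T i) (x+1) (v+1) := by
  have hP := promote_syt hr hc hT
  have hinj' : ∀ t t', t < c → t' < c → promote r c T i t = promote r c T i t' → t = t' := by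
    intro t t' ht ht' heq
    by_contra hne
    rcases Nat.lt_or_ge t t' with h' | h'
    · exact absurd heq (Nat.ne_of_lt (syt_hf hP hi h' ht'))
    · exact absurd heq.symm (Nat.ne_of_lt (syt_hf hP hi (by omega) ht))
  have hinj : ∀ t t', t < c → t' < c → T i t = T i t' → t = t' := by
    intro t t' ht ht' heq
    by_contra hne
    rcases Nat.lt_or_ge t t' with h' | h'
    · exact absurd heq (Nat.ne_of_lt (syt_hf hT hi h' ht'))
    · exact absurd heq.symm (Nat.ne_of_lt (syt_hf hT hi (by omega) ht))
  apply le_antisymm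
  · apply rowCount_shift_le
    · intro t htc ht1 ht2
      have hw : a ≤ promote r c T i t + 1 ∧ promote r c T i t + 1 ≤ b := by omega
      obtain ⟨t', ht', heq⟩ := (block_row_iff hr hc hT hsub hepts ha hi hw.1 hw.2).2
        ⟨t, htc, by omega⟩
      exact ⟨t', ht', by omega⟩
    · exact hinj'
  · apply rowCount_shift_ge
    · intro t htc ht1 ht2
      have hw : a ≤ T i t ∧ T i t ≤ b := by omega
      exact (block_row_iff hr hc hT hsub hepts ha hi hw.1 hw.2).1 ⟨t, htc, rfl⟩
    · exact hinj

include hr hc hT hsub hepts in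
lemma bal_shift {i x y : ℕ} (ha : 2 ≤ a) (hi : i < r - 1) (hx : a ≤ x) (hyb : y ≤ b)
    (hbal : Bal c T i x y) : Bal c (promote r c T) i (x-1) (y-1) := by
  obtain ⟨hxy, heq, hpre⟩ := hbal
  have hy2 : 2 ≤ y := by omega
  refine ⟨by omega, ?_, ?_⟩
  · have e1 := rowCount_promote_eq hr hc hT hsub hepts (i := i) (x := x-1) (v := y-1-1)
      ha (by omega) (by omega) (by omega)
    have e2 := rowCount_promote_eq hr hc hT hsub hepts (i := i+1) (x := x-1) (v := y-1-1)
      ha (by omega) (by omega) (by omega)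
    rw [show x-1+1 = x by omega, show y-1-1+1 = y-1 by omega] at e1 e2
    rw [e1, e2, heq]
  · intro v hv
    have e1 := rowCount_promote_eq hr hc hT hsub hepts (i := i) (x := x-1) (v := v)
      ha (by omega) (by omega) (by omega)
    have e2 := rowCount_promote_eq hr hc hT hsub hepts (i := i+1) (x := x-1) (v := v)
      ha (by omega) (by omega) (by omega)
    rw [show x-1+1 = x by omega] at e1 e2
    rw [e1, e2]
    exact hpre (v+1) (by omega)

include hr hc hT hsub hepts in
/-- The rotation of an arc of `C` is an arc of the promoted m-diagram. -/
lemma arc_rot {i m : ℕ} (ha : 2 ≤ a) (hi : i < r - 1) (hm : m < c)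
    (hCmem : (T i (partnerCol c T i m), T (i+1) m) ∈ C) :
    (T i (partnerCol c T i m) - 1, T (i+1) m - 1) ∈ mDiagram r c (promote r c T) := by
  set x := T i (partnerCol c T i m) with hxdef
  set y := T (i+1) m with hydef
  have hx : x ∈ Finset.Icc a b := by
    rw [← hepts]; exact mem_endpoints.2 ⟨_, hCmem, Or.inl rfl⟩
  have hy : y ∈ Finset.Icc a b := by
    rw [← hepts]; exact mem_endpoints.2 ⟨_, hCmem, Or.inr rfl⟩
  rw [Finset.mem_Icc] at hx hy
  have hbalT : Bal c T i x y :=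
    matched_bal (syt_hf hT (by omega)) (syt_hfg hT hi) (syt_hg hT hi)
      (syt_hdisj hr hc hT hi) hm
  have hbal' : Bal c (promote r c T) i (x-1) (y-1) :=
    bal_shift hr hc hT hsub hepts ha hi hx.1 hy.2 hbalT
  obtain ⟨m', hm', hym'⟩ := (block_row_iff hr hc hT hsub hepts ha (i := i+1)
    (by omega) hy.1 hy.2).1 ⟨m, hm, rfl⟩
  have hP := promote_syt hr hc hT
  have hbal'' : Bal c (promote r c T) i
      (promote r c T i (partnerCol c (promote r c T) i m'))
      (promote r c T (i+1) m') :=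
    matched_bal (syt_hf hP (by omega)) (syt_hfg hP hi) (syt_hg hP hi)
      (syt_hdisj hr hc hP hi) hm'
  rw [hym'] at hbal''
  have hpcx : partnerCol c T i m < c :=
    partnerCol_lt (syt_hf hT (by omega)) (syt_hfg hT hi) hm
  have hxmem : ∃ t, t < c ∧ promote r c T i t = x - 1 :=
    (block_row_iff hr hc hT hsub hepts ha (i := i) (by omega) hx.1 hx.2).1
      ⟨partnerCol c T i m, hpcx, rfl⟩
  have hx2mem : ∃ t, t < c ∧ promote r c T i t =
      promote r c T i (partnerCol c (promote r c T) i m') :=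
    ⟨partnerCol c (promote r c T) i m',
      partnerCol_lt (syt_hf hP (by omega)) (syt_hfg hP hi) hm', rfl⟩
  have huniq : promote r c T i (partnerCol c (promote r c T) i m') = x - 1 := by
    apply bal_unique (syt_hf hP (by omega)) (syt_hfg hP hi) (syt_hg hP hi)
      (syt_hdisj hr hc hP hi) ?_ ?_ hbal'' hbal'
    · obtain ⟨t, ht, he⟩ := hx2mem
      exact ⟨t, ht, he⟩
    · obtain ⟨t, ht, he⟩ := hxmem
      exact ⟨t, ht, he⟩
  exact mem_mDiagram.2 ⟨i, m', hi, hm', by rw [huniq, hym']⟩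

end Block


/-- If `C` is a uniform sub-diagram of `φ(T)` whose endpoints do not contain the
vertex `1`, then `ρ(C)` is a uniform sub-diagram of `φ(P(T))`. -/
theorem rotation_of_uniform_subdiagram (r c : ℕ) (T : ℕ → ℕ → ℕ)
    (hr : 0 < r) (hc : 0 < c) (hT : IsRectSYT r c T)
    (C : Finset (ℕ × ℕ))
    (hsub : IsSubdiagram (mDiagram r c T) C)
    (huni : IsUniform C)
    (h1 : 1 ∉ endpoints C) :
    IsSubdiagram (mDiagram r c (promote r c T)) (C.image (rotArc (r * c))) ∧
    IsUniform (C.image (rotArc (r * c))) := by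
  classical
  obtain ⟨hpre, hneq⟩ := hsub
  obtain ⟨a, b, hepts⟩ := huni
  set T' := promote r c T with hT'def
  have hP : IsRectSYT r c T' := promote_syt hr hc hT
  -- basic numeric facts
  obtain ⟨q0, hq0⟩ := hpre.2.1
  obtain ⟨i0, m0, hi0, hm0, hq0rep⟩ := mem_mDiagram.1 (hpre.1 hq0)
  have hr2 : 2 ≤ r := by omega
  obtain ⟨hbrc, hab⟩ := window_le hr hc hT hpre hepts
  have ha1 : 1 ≤ a := by
    have haep : a ∈ endpoints C := by rw [hepts, Finset.mem_Icc]; omega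
    obtain ⟨q, hq, hqa⟩ := mem_endpoints.1 haep
    obtain ⟨i, m, hi, hm, hrep⟩ := mem_mDiagram.1 (hpre.1 hq)
    subst hrep
    have hpc : partnerCol c T i m < c :=
      partnerCol_lt (syt_hf hT (by omega)) (syt_hfg hT hi) hm
    rcases hqa with h | h
    · dsimp only at h
      have := (hT.2.2.1 i _ (by omega) hpc).1
      omega
    · dsimp only at h
      have := (hT.2.2.1 (i+1) m (by omega) hm).1
      omega
  have ha : 2 ≤ a := by
    rcases Nat.lt_or_ge a 2 with h | h
    · exfalso
      apply h1
      rw [hepts, Finset.mem_Icc]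
      omega
    · exact h
  -- arcs of C : structure
  have harc : ∀ p ∈ C, ∃ i m, i < r - 1 ∧ m < c ∧
      p = (T i (partnerCol c T i m), T (i+1) m) ∧
      a ≤ p.1 ∧ p.1 < p.2 ∧ p.2 ≤ b := by
    intro p hp
    obtain ⟨i, m, hi, hm, hrep⟩ := mem_mDiagram.1 (hpre.1 hp)
    refine ⟨i, m, hi, hm, hrep, ?_, ?_, ?_⟩
    · have : p.1 ∈ endpoints C := mem_endpoints.2 ⟨p, hp, Or.inl rfl⟩
      rw [hepts, Finset.mem_Icc] at this
      omega
    · rw [hrep]; exact arc_lt hr hc hT hi hm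
    · have : p.2 ∈ endpoints C := mem_endpoints.2 ⟨p, hp, Or.inr rfl⟩
      rw [hepts, Finset.mem_Icc] at this
      omega
  -- rotation is decrement on C
  have himg : C.image (rotArc (r * c)) = C.image (fun p => (p.1 - 1, p.2 - 1)) := by
    apply Finset.image_congr
    intro p hp
    obtain ⟨i, m, hi, hm, hrep, hp1, hp12, hp2⟩ := harc p hp
    unfold rotArc rotIdx
    rw [if_neg (by omega : p.1 ≠ 1), if_neg (by omega : p.2 ≠ 1)]
    rw [min_eq_left (by omega), max_eq_right (by omega)]
  rw [himg]
  set D := C.image (fun p => (p.1 - 1, p.2 - 1)) with hDdef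
  -- D is a subset of the promoted m-diagram
  have hsubM' : D ⊆ mDiagram r c T' := by
    intro p' hp'
    rw [hDdef, Finset.mem_image] at hp'
    obtain ⟨p, hp, hrot⟩ := hp'
    obtain ⟨i, m, hi, hm, hrep, _, _, _⟩ := harc p hp
    rw [← hrot, hrep]
    dsimp only
    exact arc_rot hr hc hT hpre hepts ha hi hm (hrep ▸ hp)
  -- endpoints of D
  have heptsD : endpoints D = Finset.Icc (a-1) (b-1) := by
    ext w
    rw [Finset.mem_Icc]
    constructor
    · intro hw
      obtain ⟨q', hq', hco⟩ := mem_endpoints.1 hw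
      rw [hDdef, Finset.mem_image] at hq'
      obtain ⟨p, hp, hrot⟩ := hq'
      obtain ⟨_, _, _, _, _, hp1, hp12, hp2⟩ := harc p hp
      rcases hco with h | h <;> rw [← hrot] at h <;> dsimp only at h <;> omega
    · intro hw
      have : w + 1 ∈ endpoints C := by rw [hepts, Finset.mem_Icc]; omega
      obtain ⟨q, hq, hco⟩ := mem_endpoints.1 this
      apply mem_endpoints.2
      refine ⟨(q.1 - 1, q.2 - 1), Finset.mem_image.2 ⟨q, hq, rfl⟩, ?_⟩
      rcases hco with h | h
      · left; dsimp only; omega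
      · right; dsimp only; omega
  -- closure of D under sharing endpoints
  have hclose : ∀ p ∈ mDiagram r c T', ∀ q ∈ D, SharesEndpoint p q → p ∈ D := by
    intro p hpM q hq hsh
    obtain ⟨i, m, hi, hm, hrep⟩ := mem_mDiagram.1 hpM
    have hq1 : q.1 ∈ Finset.Icc (a-1) (b-1) := by
      rw [← heptsD]; exact mem_endpoints.2 ⟨q, hq, Or.inl rfl⟩
    have hq2 : q.2 ∈ Finset.Icc (a-1) (b-1) := by
      rw [← heptsD]; exact mem_endpoints.2 ⟨q, hq, Or.inr rfl⟩
    rw [Finset.mem_Icc] at hq1 hq2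
    have hwin : (a - 1 ≤ p.1 ∧ p.1 ≤ b - 1) ∨ (a - 1 ≤ p.2 ∧ p.2 ≤ b - 1) := by
      rcases hsh with h | h | h | h
      · left; omega
      · left; omega
      · right; omega
      · right; omega
    rcases hwin with ⟨hw1, hw2⟩ | ⟨hw1, hw2⟩
    · -- p shares its left endpoint with the window
      set w := p.1 with hwdef
      have hwrow : ∃ t0, t0 < c ∧ T i t0 = w + 1 := by
        apply (block_row_iff hr hc hT hpre hepts ha (i := i) (by omega)
          (by omega) (by omega)).2
        refine ⟨partnerCol c T' i m, partnerCol_lt (syt_hf hP (by omega))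
          (syt_hfg hP hi) hm, ?_⟩
        rw [show w + 1 - 1 = w by omega, hwdef, hrep]
      obtain ⟨t0, ht0, hT0⟩ := hwrow
      obtain ⟨m2, hm2, hpcm2⟩ := partnerCol_surj (syt_hf hT (by omega))
        (syt_hfg hT hi) ht0
      have harc0M : (T i (partnerCol c T i m2), T (i+1) m2) ∈ mDiagram r c T :=
        mem_mDiagram.2 ⟨i, m2, hi, hm2, rfl⟩
      have harc0C : (T i (partnerCol c T i m2), T (i+1) m2) ∈ C := by
        apply arc_mem_C hpre hepts (y := w+1) ⟨by omega, by omega⟩ harc0M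
        left
        dsimp only
        rw [hpcm2, hT0]
      have hrot0 : ((T i (partnerCol c T i m2)) - 1, (T (i+1) m2) - 1) ∈ D :=
        Finset.mem_image.2 ⟨_, harc0C, rfl⟩
      have hrot0M : ((T i (partnerCol c T i m2)) - 1, (T (i+1) m2) - 1)
          ∈ mDiagram r c T' := hsubM' hrot0
      obtain ⟨i3, m3, hi3, hm3, hrep3⟩ := mem_mDiagram.1 hrot0M
      have hw3 : T' i3 (partnerCol c T' i3 m3) = w := by
        have := congrArg Prod.fst hrep3
        dsimp only at this
        rw [hpcm2, hT0] at this
        omega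
    -- left endpoints agree, so the arcs agree
      have := arc_left_unique hr hc hP hi3 hm3 hi hm (by
        rw [hw3, hwdef, hrep])
      obtain ⟨e1, e2⟩ := this
      rw [hrep, ← e1, ← e2, ← hrep3]
      exact hrot0
    · -- p shares its right endpoint with the window
      set w := p.2 with hwdef
      have hwrow : ∃ m0, m0 < c ∧ T (i+1) m0 = w + 1 := by
        apply (block_row_iff hr hc hT hpre hepts ha (i := i+1) (by omega)
          (by omega) (by omega)).2
        refine ⟨m, hm, ?_⟩
        rw [show w + 1 - 1 = w by omega, hwdef, hrep]
      obtain ⟨m0, hm0, hT0⟩ := hwrow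
      have harc0M : (T i (partnerCol c T i m0), T (i+1) m0) ∈ mDiagram r c T :=
        mem_mDiagram.2 ⟨i, m0, hi, hm0, rfl⟩
      have harc0C : (T i (partnerCol c T i m0), T (i+1) m0) ∈ C := by
        apply arc_mem_C hpre hepts (y := w+1) ⟨by omega, by omega⟩ harc0M
        right
        dsimp only
        rw [hT0]
      have hrot0 : ((T i (partnerCol c T i m0)) - 1, (T (i+1) m0) - 1) ∈ D :=
        Finset.mem_image.2 ⟨_, harc0C, rfl⟩
      have hrot0M : ((T i (partnerCol c T i m0)) - 1, (T (i+1) m0) - 1)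
          ∈ mDiagram r c T' := hsubM' hrot0
      obtain ⟨i3, m3, hi3, hm3, hrep3⟩ := mem_mDiagram.1 hrot0M
      have hw3 : T' (i3+1) m3 = w := by
        have := congrArg Prod.snd hrep3
        dsimp only at this
        rw [hT0] at this
        omega
      have := arc_right_unique hr hc hP hi3 hm3 hi hm (by
        rw [hw3, hwdef, hrep])
      obtain ⟨e1, e2⟩ := this
      rw [hrep, ← e1, ← e2, ← hrep3]
      exact hrot0
  -- no crossings from outside
  have hcross : ∀ p ∈ mDiagram r c T', p ∉ D → ∀ q ∈ D, ¬ Crosses p q := by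
    intro p hpM hpD q hq hcr
    have hq1 : q.1 ∈ Finset.Icc (a-1) (b-1) := by
      rw [← heptsD]; exact mem_endpoints.2 ⟨q, hq, Or.inl rfl⟩
    have hq2 : q.2 ∈ Finset.Icc (a-1) (b-1) := by
      rw [← heptsD]; exact mem_endpoints.2 ⟨q, hq, Or.inr rfl⟩
    rw [Finset.mem_Icc] at hq1 hq2
    have hout1 : ¬ (a - 1 ≤ p.1 ∧ p.1 ≤ b - 1) := by
      intro hin
      apply hpD
      have : p.1 ∈ endpoints D := by rw [heptsD, Finset.mem_Icc]; exact hin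
      obtain ⟨q', hq', hco⟩ := mem_endpoints.1 this
      apply hclose p hpM q' hq'
      unfold SharesEndpoint
      rcases hco with h | h
      · left; omega
      · right; left; omega
    have hout2 : ¬ (a - 1 ≤ p.2 ∧ p.2 ≤ b - 1) := by
      intro hin
      apply hpD
      have : p.2 ∈ endpoints D := by rw [heptsD, Finset.mem_Icc]; exact hin
      obtain ⟨q', hq', hco⟩ := mem_endpoints.1 this
      apply hclose p hpM q' hq'
      unfold SharesEndpoint
      rcases hco with h | h
      · right; right; left; omega
      · right; right; right; omega
    unfold Crosses at hcr
    omega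
  -- properness
  have hproper : D ≠ mDiagram r c T' := by
    intro heq
    have hmem : (T' (r-2) (partnerCol c T' (r-2) (c-1)), T' (r-2+1) (c-1))
        ∈ mDiagram r c T' := mem_mDiagram.2 ⟨r-2, c-1, by omega, by omega, rfl⟩
    rw [← heq] at hmem
    have : T' (r-2+1) (c-1) ∈ endpoints D := mem_endpoints.2 ⟨_, hmem, Or.inr rfl⟩
    rw [heptsD, Finset.mem_Icc] at this
    have hcor : T' (r-2+1) (c-1) = r * c := by
      rw [show r - 2 + 1 = r - 1 by omega]
      exact promote_corner hr hc
    have hrc2 : 2 ≤ r * c := by nlinarith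
    omega
  exact ⟨⟨⟨hsubM', hpre.2.1.image _, hclose, hcross⟩, hproper⟩, ⟨a-1, b-1, heptsD⟩⟩
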